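/- Let G be a finite connected weighted graph with terminals T, S ⊂ T nonempty and proper, and E_S the minimum cutset separating S from T∖S. Then there exists a connected component C of G∖E_S such that removing δ(C) from G leaves exactly two connected components (i.e., C is an elementary component). -/

import Mathlib

def Separates {V : Type} (G : SimpleGraph V) (F : Set (Sym2 V)) (A B : Set V) : Prop :=
  ∀ a ∈ A, ∀ b ∈ B, ¬ (G.deleteEdges F).Reachable a b

noncomputable def cutWeight {V : Type} (c : Sym2 V → ℝ) (F : Finset (Sym2 V)) : ℝ :=
  ∑ e ∈ F, c e

def IsMinCutset {V : Type} (G : SimpleGraph V) (c : Sym2 V → ℝ) (T S : Set V)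
    (F : Finset (Sym2 V)) : Prop :=
  (F : Set (Sym2 V)) ⊆ G.edgeSet ∧ Separates G (F : Set (Sym2 V)) S (T \ S) ∧
  ∀ F' : Finset (Sym2 V), (F' : Set (Sym2 V)) ⊆ G.edgeSet →
    Separates G (F' : Set (Sym2 V)) S (T \ S) → cutWeight c F ≤ cutWeight c F'

noncomputable def boundaryF {V : Type} [Fintype V] (G : SimpleGraph V) (C : Set V) :
    Finset (Sym2 V) :=
  (Set.toFinite {e | e ∈ G.edgeSet ∧ ∃ u v, e = s(u, v) ∧ u ∈ C ∧ v ∉ C}).toFinset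

/-- Number of connected components of a graph. -/
noncomputable def numComponents {V : Type} (G : SimpleGraph V) : ℕ :=
  Nat.card G.ConnectedComponent

/-- In a finite preconnected graph with at least two vertices, there is a vertex `a`
(one at maximal distance from a root) such that any two vertices distinct from `a`
are joined by a walk avoiding `a`. -/
lemma exists_noncut_vertex {β : Type} [Finite β] (H : SimpleGraph β)
    (hpre : H.Preconnected) (x₀ y₀ : β) (hne : x₀ ≠ y₀) :
    ∃ a : β, ∀ x y : β, x ≠ a → y ≠ a → ∃ p : H.Walk x y, a ∉ p.support := by
  classical
  have : Nonempty β := ⟨x₀⟩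
  obtain ⟨a, ha⟩ := Finite.exists_max (fun b => H.dist x₀ b)
  -- every vertex `x ≠ a` has a shortest walk to `x₀` avoiding `a`
  have key : ∀ x : β, x ≠ a → ∃ p : H.Walk x x₀, a ∉ p.support := by
    intro x hx
    obtain ⟨p, hp⟩ := (hpre x x₀).exists_walk_length_eq_dist
    refine ⟨p, fun hmem => ?_⟩
    have hlen := congrArg SimpleGraph.Walk.length (p.take_spec hmem)
    rw [SimpleGraph.Walk.length_append] at hlen
    have h1 : 1 ≤ (p.takeUntil a hmem).length := by
      rcases Nat.eq_zero_or_pos (p.takeUntil a hmem).length with h0 | h0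
      · exact absurd (SimpleGraph.Walk.eq_of_length_eq_zero h0) hx
      · exact h0
    have h2 : H.dist a x₀ ≤ (p.dropUntil a hmem).length :=
      SimpleGraph.dist_le _
    have hmax : H.dist x₀ x ≤ H.dist x₀ a := ha x
    have hxc : p.length = H.dist x x₀ := hp
    have hc1 : H.dist x₀ x = H.dist x x₀ := SimpleGraph.dist_comm
    have hc2 : H.dist a x₀ = H.dist x₀ a := SimpleGraph.dist_comm
    omega
  have hax : a ≠ x₀ := by
    intro h
    subst h
    have h1 : 0 < H.dist a y₀ := (hpre a y₀).pos_dist_of_ne hne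
    have h2 : H.dist a y₀ ≤ H.dist a a := ha y₀
    rw [SimpleGraph.dist_self] at h2
    omega
  refine ⟨a, fun x y hx hy => ?_⟩
  obtain ⟨p, hp⟩ := key x hx
  obtain ⟨q, hq⟩ := key y hy
  refine ⟨p.append q.reverse, fun hmem => ?_⟩
  rw [SimpleGraph.Walk.mem_support_append_iff] at hmem
  rcases hmem with h | h
  · exact hp h
  · rw [SimpleGraph.Walk.support_reverse, List.mem_reverse] at h
    exact hq h

/-- some connected component `C` of `G ∖ E_S` is elementary, i.e.
removing its boundary `δ(C)` from `G` leaves exactly two connected components. -/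
theorem exists_elementary_component {V : Type} [Fintype V]
    (G : SimpleGraph V) (c : Sym2 V → ℝ)
    (hconn : G.Connected) (hpos : ∀ e ∈ G.edgeSet, 0 < c e)
    (T S : Set V) (hST : S ⊆ T) (hS : S.Nonempty) (hSne : S ≠ T)
    (F : Finset (Sym2 V)) (hF : IsMinCutset G c T S F) :
    ∃ w : V,
      numComponents (G.deleteEdges
        (↑(boundaryF G {v | (G.deleteEdges (F : Set (Sym2 V))).Reachable w v}) :
          Set (Sym2 V))) = 2 := by
  classical
  set G' := G.deleteEdges (F : Set (Sym2 V)) with hG'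
  let f : V → G'.ConnectedComponent := G'.connectedComponentMk
  -- the quotient graph on components
  let H : SimpleGraph G'.ConnectedComponent :=
    { Adj := fun b b' => b ≠ b' ∧ ∃ u v, G.Adj u v ∧ f u = b ∧ f v = b'
      symm := by
        constructor; rintro b b' ⟨hne, u, v, hadj, hu, hv⟩
        exact ⟨hne.symm, v, u, hadj.symm, hv, hu⟩
      loopless := by constructor; rintro b ⟨hne, -⟩; exact hne rfl }
  -- H is preconnected
  have hHpre : H.Preconnected := by
    have step : ∀ u v : V, G.Reachable u v → H.Reachable (f u) (f v) := by
      intro u v h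
      obtain ⟨p⟩ := h
      induction p with
      | nil => exact SimpleGraph.Reachable.refl _
      | @cons x y z h p ih =>
        by_cases hfe : f x = f y
        · rw [hfe]; exact ih
        · have hadj : H.Adj (f x) (f y) := ⟨hfe, x, y, h, rfl, rfl⟩
          exact hadj.reachable.trans ih
    intro b b'
    obtain ⟨u, rfl⟩ := Quot.exists_rep b
    obtain ⟨v, rfl⟩ := Quot.exists_rep b'
    exact step u v (hconn u v)
  -- two distinct components exist
  obtain ⟨s, hsS⟩ := hS
  have hTS : ∃ t, t ∈ T \ S := by
    by_contra h
    push_neg at h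
    exact hSne (Set.Subset.antisymm hST (fun t ht => by
      by_contra hts
      exact h t ⟨ht, hts⟩))
  obtain ⟨t₀, ht₀⟩ := hTS
  have hsep : ¬ G'.Reachable s t₀ := hF.2.1 s hsS t₀ ht₀
  have hst : f s ≠ f t₀ := fun h => hsep (SimpleGraph.ConnectedComponent.exact h)
  -- the non-cut component `a`
  obtain ⟨a, hleaf⟩ := exists_noncut_vertex H hHpre (f s) (f t₀) hst
  obtain ⟨w, hw⟩ := Quot.exists_rep a
  refine ⟨w, ?_⟩
  set C : Set V := {v | G'.Reachable w v} with hC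
  have memC : ∀ v, v ∈ C ↔ f v = a := by
    intro v
    constructor
    · intro h
      rw [← hw]
      exact SimpleGraph.ConnectedComponent.sound h.symm
    · intro h
      rw [← hw] at h
      exact (SimpleGraph.ConnectedComponent.exact h).symm
  set D := boundaryF G C with hDdef
  have hD : ∀ e, e ∈ D ↔ e ∈ G.edgeSet ∧ ∃ u v, e = s(u, v) ∧ u ∈ C ∧ v ∉ C := by
    intro e
    rw [hDdef, boundaryF, Set.Finite.mem_toFinset]
    rfl
  set K := G.deleteEdges (↑D : Set (Sym2 V)) with hK
  -- K-adjacency from G-adjacency when both sides agree about C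
  have hKadj : ∀ u v : V, G.Adj u v → (u ∈ C ↔ v ∈ C) → K.Adj u v := by
    intro u v hadj hiff
    rw [hK, SimpleGraph.deleteEdges_adj]
    refine ⟨hadj, fun hmem => ?_⟩
    rw [Finset.mem_coe, hD] at hmem
    obtain ⟨-, u', v', heq, hu', hv'⟩ := hmem
    rw [Sym2.eq_iff] at heq
    rcases heq with ⟨rfl, rfl⟩ | ⟨rfl, rfl⟩
    · exact hv' (hiff.mp hu')
    · exact hv' (hiff.mpr hu')
  -- K-adjacency preserves membership in C
  have hKpres : ∀ u v : V, K.Adj u v → (u ∈ C ↔ v ∈ C) := by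
    intro u v hadj
    rw [hK, SimpleGraph.deleteEdges_adj] at hadj
    obtain ⟨hGadj, hnmem⟩ := hadj
    constructor
    · intro hu
      by_contra hv
      exact hnmem (Finset.mem_coe.mpr ((hD _).mpr ⟨hGadj, u, v, rfl, hu, hv⟩))
    · intro hv
      by_contra hu
      refine hnmem (Finset.mem_coe.mpr ((hD _).mpr ⟨hGadj, v, u, ?_, hv, hu⟩))
      exact Sym2.eq_swap
  have hKreachpres : ∀ u v : V, K.Reachable u v → (u ∈ C ↔ v ∈ C) := by
    intro u v h
    obtain ⟨p⟩ := h
    induction p with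
    | nil => rfl
    | cons h p ih => exact (hKpres _ _ h).trans ih
  -- G'-reachability lifts to K-reachability
  have lift : ∀ u v : V, G'.Reachable u v → K.Reachable u v := by
    intro u v h
    obtain ⟨p⟩ := h
    induction p with
    | nil => exact SimpleGraph.Reachable.refl _
    | @cons x y z h p ih =>
      have hfxy : f x = f y := SimpleGraph.ConnectedComponent.sound h.reachable
      have hGadj : G.Adj x y := (SimpleGraph.deleteEdges_le _) h
      have : K.Adj x y := hKadj x y hGadj (by rw [memC, memC, hfxy])
      exact this.reachable.trans ih
  have liftf : ∀ u v : V, f u = f v → K.Reachable u v := fun u v h =>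
    lift u v (SimpleGraph.ConnectedComponent.exact h)
  -- walks in H avoiding a lift to K-reachability
  have Hlift : ∀ {b b' : G'.ConnectedComponent} (p : H.Walk b b'), a ∉ p.support →
      ∀ u v : V, f u = b → f v = b' → K.Reachable u v := by
    intro b b' p
    induction p with
    | nil =>
      intro _ u v hu hv
      exact liftf u v (hu.trans hv.symm)
    | @cons x y z hxy p ih =>
      intro hna u v hu hv
      rw [SimpleGraph.Walk.support_cons, List.mem_cons] at hna
      push_neg at hna
      obtain ⟨hax, hap⟩ := hna
      obtain ⟨hne, u₁, v₁, hadj, hu₁, hv₁⟩ := hxy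
      have hay : a ≠ y := by
        intro h'
        exact hap (h' ▸ SimpleGraph.Walk.start_mem_support p)
      have h1 : K.Reachable u u₁ := liftf u u₁ (hu.trans hu₁.symm)
      have h2 : K.Adj u₁ v₁ := by
        refine hKadj u₁ v₁ hadj ?_
        rw [memC, memC, hu₁, hv₁]
        constructor
        · intro h'; exact absurd h'.symm hax
        · intro h'; exact absurd h'.symm hay
      have h3 : K.Reachable v₁ v := ih hap v₁ v hv₁ hv
      exact (h1.trans h2.reachable).trans h3
  -- pick a vertex outside C
  have houtside : ∃ t : V, t ∉ C := by
    rcases eq_or_ne (f s) a with h | h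
    · exact ⟨t₀, fun hmem => hst (h.trans ((memC t₀).mp hmem).symm)⟩
    · exact ⟨s, fun hmem => h ((memC s).mp hmem)⟩
  obtain ⟨t, ht⟩ := houtside
  have hwC : w ∈ C := Set.mem_setOf_eq ▸ SimpleGraph.Reachable.refl w
  -- exactly two components
  show Nat.card K.ConnectedComponent = 2
  rw [Nat.card_eq_two_iff]
  refine ⟨K.connectedComponentMk w, K.connectedComponentMk t, ?_, ?_⟩
  · intro h
    exact ht ((hKreachpres w t (SimpleGraph.ConnectedComponent.exact h)).mp hwC)
  · apply Set.eq_univ_of_forall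
    intro z
    obtain ⟨v, rfl⟩ := Quot.exists_rep z
    by_cases hv : v ∈ C
    · left
      have hv' : G'.Reachable w v := hv
      exact SimpleGraph.ConnectedComponent.sound (lift w v hv').symm
    · right
      have hfv : f v ≠ a := fun h => hv ((memC v).mpr h)
      have hft : f t ≠ a := fun h => ht ((memC t).mpr h)
      obtain ⟨p, hp⟩ := hleaf (f v) (f t) hfv hft
      exact SimpleGraph.ConnectedComponent.sound (Hlift p hp v t rfl rfl)
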